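/- Let A(x,z) be a symmetric n×n matrix-valued function, C¹ in z, defined for (x,z) ∈ Ω' × [-M₀,M₀], satisfying for some vector of nonnegative functions k = (k¹,…,kⁿ) and Λ ≥ 1 the diagonal equivalence ∑ᵢ kⁱ(x,z) ξᵢ² ≤ ξᵗ A(x,z) ξ ≤ Λ ∑ᵢ kⁱ(x,z) ξᵢ² for all ξ ∈ ℝⁿ, and the super subordination condition |∂_z A(x,z) ξ|² ≤ B² k*(x,z) ξᵗ A(x,z) ξ where k* = minᵢ kⁱ. Then there exists a constant C = C(B, M₀) such that for all (x,z), (x,z̃) ∈ Ω' × [-M₀,M₀] and all ξ ∈ ℝⁿ, C⁻¹ ξᵗ A(x,z) ξ ≤ ξᵗ A(x,z̃) ξ ≤ C ξᵗ A(x,z) ξ. -/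

import Mathlib

open Set Matrix

/-- Grönwall: one-sided comparison along an interval. -/
lemma gron_aux {f f' : ℝ → ℝ} {a b K : ℝ} (hab : a ≤ b) (hK : 0 ≤ K)
    (hf : ∀ t ∈ Icc a b, HasDerivAt f (f' t) t)
    (bound : ∀ t ∈ Icc a b, |f' t| ≤ K * |f t|) :
    |f b| ≤ |f a| * Real.exp (K * (b - a)) := by
  have hcont : ContinuousOn f (Icc a b) := fun t ht =>
    (hf t ht).continuousAt.continuousWithinAt
  have h := norm_le_gronwallBound_of_norm_deriv_right_le (f := f) (f' := f')
    (δ := ‖f a‖) (K := K) (ε := 0) hcont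
    (fun t ht => (hf t (Ico_subset_Icc_self ht)).hasDerivWithinAt)
    le_rfl
    (fun t ht => by
      simpa [Real.norm_eq_abs] using bound t (Ico_subset_Icc_self ht))
    b (right_mem_Icc.2 hab)
  rwa [gronwallBound_ε0, Real.norm_eq_abs, Real.norm_eq_abs] at h

/-- Grönwall: two-sided comparison along an interval. -/
lemma gron_aux2 {f f' : ℝ → ℝ} {a b K : ℝ} (hab : a ≤ b) (hK : 0 ≤ K)
    (hf : ∀ t ∈ Icc a b, HasDerivAt f (f' t) t)
    (bound : ∀ t ∈ Icc a b, |f' t| ≤ K * |f t|) :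
    |f b| ≤ |f a| * Real.exp (K * (b - a)) ∧
      |f a| ≤ |f b| * Real.exp (K * (b - a)) := by
  refine ⟨gron_aux hab hK hf bound, ?_⟩
  -- reverse direction: consider g t = f (a + b - t)
  have hmem : ∀ t ∈ Icc a b, a + b - t ∈ Icc a b := by
    intro t ht
    constructor <;> [linarith [ht.2]; linarith [ht.1]]
  have hg : ∀ t ∈ Icc a b, HasDerivAt (fun t => f (a + b - t))
      (f' (a + b - t) * (-1)) t := by
    intro t ht
    exact (hf _ (hmem t ht)).comp t ((hasDerivAt_id t).const_sub (a + b))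
  have h := gron_aux (f := fun t => f (a + b - t))
    (f' := fun t => f' (a + b - t) * (-1)) hab hK hg
    (fun t ht => by
      simpa [abs_mul] using bound _ (hmem t ht))
  simpa using h

theorem quadratic_form_comparability {n : ℕ} (Ω' : Set (Fin (n + 1) → ℝ))
    (M₀ Λ B : ℝ) (hM : 1 ≤ M₀) (hΛ : 1 ≤ Λ) (hB : 0 < B)
    (A Az : (Fin (n + 1) → ℝ) → ℝ → Matrix (Fin (n + 1)) (Fin (n + 1)) ℝ)
    (k : Fin (n + 1) → (Fin (n + 1) → ℝ) → ℝ → ℝ)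
    (hk : ∀ i x z, 0 ≤ k i x z)
    (hsymm : ∀ x z, (A x z).IsSymm)
    (hAz : ∀ x ∈ Ω', ∀ z ∈ Icc (-M₀) M₀, ∀ i j, HasDerivAt (fun t => A x t i j) (Az x z i j) z)
    (hdiag : ∀ x ∈ Ω', ∀ z ∈ Icc (-M₀) M₀, ∀ ξ : Fin (n + 1) → ℝ,
      (∑ i, k i x z * ξ i ^ 2) ≤ ξ ⬝ᵥ (A x z *ᵥ ξ) ∧
        ξ ⬝ᵥ (A x z *ᵥ ξ) ≤ Λ * ∑ i, k i x z * ξ i ^ 2)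
    (hss : ∀ x ∈ Ω', ∀ z ∈ Icc (-M₀) M₀, ∀ ξ : Fin (n + 1) → ℝ,
      (∑ j, ((Az x z *ᵥ ξ) j) ^ 2) ≤ B ^ 2 * (⨅ i, k i x z) * (ξ ⬝ᵥ (A x z *ᵥ ξ))) :
    ∃ C : ℝ, 0 < C ∧ ∀ x ∈ Ω', ∀ z ∈ Icc (-M₀) M₀, ∀ zt ∈ Icc (-M₀) M₀,
      ∀ ξ : Fin (n + 1) → ℝ,
        C⁻¹ * (ξ ⬝ᵥ (A x z *ᵥ ξ)) ≤ ξ ⬝ᵥ (A x zt *ᵥ ξ) ∧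
          ξ ⬝ᵥ (A x zt *ᵥ ξ) ≤ C * (ξ ⬝ᵥ (A x z *ᵥ ξ)) := by
  set C : ℝ := Real.exp (B * (2 * M₀)) with hC
  have hCpos : 0 < C := Real.exp_pos _
  refine ⟨C, hCpos, ?_⟩
  intro x hx z hz zt hzt ξ
  -- nonnegativity of the quadratic form
  have hpos : ∀ t ∈ Icc (-M₀) M₀, 0 ≤ ξ ⬝ᵥ (A x t *ᵥ ξ) := by
    intro t ht
    refine le_trans ?_ (hdiag x hx t ht ξ).1
    exact Finset.sum_nonneg fun i _ => mul_nonneg (hk i x t) (sq_nonneg _)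
  -- derivative of the quadratic form
  have hderiv : ∀ t ∈ Icc (-M₀) M₀,
      HasDerivAt (fun s => ξ ⬝ᵥ (A x s *ᵥ ξ)) (ξ ⬝ᵥ (Az x t *ᵥ ξ)) t := by
    intro t ht
    simp only [dotProduct, mulVec]
    apply HasDerivAt.fun_sum
    intro j _
    exact ((HasDerivAt.fun_sum fun i _ =>
      (hAz x hx t ht j i).mul_const (ξ i)).const_mul (ξ j))
  -- the Grönwall bound on the derivative
  have hbound : ∀ t ∈ Icc (-M₀) M₀,
      |ξ ⬝ᵥ (Az x t *ᵥ ξ)| ≤ B * |ξ ⬝ᵥ (A x t *ᵥ ξ)| := by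
    intro t ht
    have hkstar : 0 ≤ ⨅ i, k i x t := le_ciInf fun i => hk i x t
    have hkle : (⨅ i, k i x t) * ∑ i, ξ i ^ 2 ≤ ξ ⬝ᵥ (A x t *ᵥ ξ) := by
      refine le_trans ?_ (hdiag x hx t ht ξ).1
      rw [Finset.mul_sum]
      refine Finset.sum_le_sum fun i _ => ?_
      exact mul_le_mul_of_nonneg_right
        (ciInf_le (Finite.bddBelow_range _) i) (sq_nonneg _)
    have hcs : (ξ ⬝ᵥ (Az x t *ᵥ ξ)) ^ 2 ≤
        (∑ i, ξ i ^ 2) * ∑ j, ((Az x t *ᵥ ξ) j) ^ 2 := by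
      simpa [dotProduct] using
        Finset.sum_mul_sq_le_sq_mul_sq Finset.univ ξ (Az x t *ᵥ ξ)
    have hsq : (ξ ⬝ᵥ (Az x t *ᵥ ξ)) ^ 2 ≤ (B * (ξ ⬝ᵥ (A x t *ᵥ ξ))) ^ 2 := by
      have h1 := hss x hx t ht ξ
      have h2 : (∑ i, ξ i ^ 2) * ∑ j, ((Az x t *ᵥ ξ) j) ^ 2 ≤
          (∑ i, ξ i ^ 2) * (B ^ 2 * (⨅ i, k i x t) * (ξ ⬝ᵥ (A x t *ᵥ ξ))) :=
        mul_le_mul_of_nonneg_left h1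
          (Finset.sum_nonneg fun i _ => sq_nonneg _)
      have h3 : (∑ i, ξ i ^ 2) * (B ^ 2 * (⨅ i, k i x t) * (ξ ⬝ᵥ (A x t *ᵥ ξ))) ≤
          B ^ 2 * (ξ ⬝ᵥ (A x t *ᵥ ξ)) * (ξ ⬝ᵥ (A x t *ᵥ ξ)) := by
        nlinarith [hpos t ht, sq_nonneg B, hkle,
          mul_le_mul_of_nonneg_right hkle (mul_nonneg (sq_nonneg B) (hpos t ht))]
      calc (ξ ⬝ᵥ (Az x t *ᵥ ξ)) ^ 2 ≤ _ := hcs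
        _ ≤ _ := h2
        _ ≤ B ^ 2 * (ξ ⬝ᵥ (A x t *ᵥ ξ)) * (ξ ⬝ᵥ (A x t *ᵥ ξ)) := h3
        _ = (B * (ξ ⬝ᵥ (A x t *ᵥ ξ))) ^ 2 := by ring
    have := abs_le_of_sq_le_sq hsq (mul_nonneg hB.le (hpos t ht))
    rwa [abs_of_nonneg (hpos t ht)]
  -- apply the two-sided Grönwall lemma on [min z zt, max z zt]
  have key : ∀ a ∈ Icc (-M₀) M₀, ∀ b ∈ Icc (-M₀) M₀, a ≤ b →
      ξ ⬝ᵥ (A x b *ᵥ ξ) ≤ C * (ξ ⬝ᵥ (A x a *ᵥ ξ)) ∧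
        ξ ⬝ᵥ (A x a *ᵥ ξ) ≤ C * (ξ ⬝ᵥ (A x b *ᵥ ξ)) := by
    intro a ha b hb hab
    have hsub : Icc a b ⊆ Icc (-M₀) M₀ := Icc_subset_Icc ha.1 hb.2
    have h := gron_aux2 (f := fun s => ξ ⬝ᵥ (A x s *ᵥ ξ))
      (f' := fun s => ξ ⬝ᵥ (Az x s *ᵥ ξ)) hab hB.le
      (fun t ht => hderiv t (hsub ht))
      (fun t ht => hbound t (hsub ht))
    have hexp : Real.exp (B * (b - a)) ≤ C := by
      apply Real.exp_le_exp.2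
      have : b - a ≤ 2 * M₀ := by
        have := ha.1; have := hb.2; linarith
      nlinarith
    have ha' := abs_of_nonneg (hpos a ha)
    have hb' := abs_of_nonneg (hpos b hb)
    rw [ha', hb'] at h
    constructor
    · exact h.1.trans (by
        rw [mul_comm C _]
        exact mul_le_mul_of_nonneg_left hexp (hpos a ha))
    · exact h.2.trans (by
        rw [mul_comm C _]
        exact mul_le_mul_of_nonneg_left hexp (hpos b hb))
  have main : ξ ⬝ᵥ (A x zt *ᵥ ξ) ≤ C * (ξ ⬝ᵥ (A x z *ᵥ ξ)) ∧
      ξ ⬝ᵥ (A x z *ᵥ ξ) ≤ C * (ξ ⬝ᵥ (A x zt *ᵥ ξ)) := by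
    rcases le_total z zt with h | h
    · exact ⟨(key z hz zt hzt h).1, (key z hz zt hzt h).2⟩
    · exact ⟨(key zt hzt z hz h).2, (key zt hzt z hz h).1⟩
  refine ⟨?_, main.1⟩
  rw [inv_mul_le_iff₀ hCpos]
  linarith [main.2]
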